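/- (Ditor) For every positive integer n, every n-ladder of cardinality ℵ_{n-1} is maximal; that is, an n-ladder of cardinality ℵ_{n-1} is not order-isomorphic to a proper ideal of any n-ladder. -/

import Mathlib

universe u v

open Cardinal


theorem kuratowski_free : ∀ (n : ℕ) (α : Type u), Cardinal.aleph (n : Ordinal) ≤ Cardinal.mk α →
    ∀ F : (Fin n → α) → Set α, (∀ t, (F t).Finite) →
    ∃ a : Fin (n+1) → α, Function.Injective a ∧
      ∀ i : Fin (n+1), a i ∉ F (fun j => a (i.succAbove j)) := by
  intro n
  induction n with
  | zero =>
    intro α hα F hF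
    have : Infinite α := by
      rw [Cardinal.infinite_iff]
      simpa using hα
    have h1 : (F (fun j : Fin 0 => (Fin.elim0 j : α))).Finite := hF _
    obtain ⟨b, hb⟩ := (Set.Finite.infinite_compl h1).nonempty
    refine ⟨fun _ => b, fun i j _ => Fin.fin_one_eq_zero i ▸ (Fin.fin_one_eq_zero j).symm ▸ rfl, ?_⟩
    intro i
    have : (fun j : Fin 0 => b) = (fun j : Fin 0 => (Fin.elim0 j : α)) := by
      funext j; exact Fin.elim0 j
    rw [this]
    exact hb
  | succ n ih =>
    intro α hα F hF
    -- choose A of size aleph n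
    have hle : Cardinal.aleph (n : Ordinal) ≤ Cardinal.mk α := by
      refine le_trans ?_ hα
      exact Cardinal.aleph_le_aleph.mpr (by exact_mod_cast Nat.cast_le.mpr (Nat.le_succ n))
    obtain ⟨A, hA⟩ := Cardinal.le_mk_iff_exists_set.mp hle
    have haleph0 : ℵ₀ ≤ Cardinal.aleph (n : Ordinal) := Cardinal.aleph0_le_aleph _
    -- the forbidden set
    set U : Set α := A ∪ ⋃ (t : Fin (n+1) → ↥A), F (fun j => ((t j : α))) with hU
    have hUcard : Cardinal.mk ↥U < Cardinal.mk α := by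
      have h1 : Cardinal.mk ↥(⋃ (t : Fin (n+1) → ↥A), F (fun j => ((t j : α)))) ≤
          Cardinal.aleph (n : Ordinal) := by
        refine le_trans (Cardinal.mk_iUnion_le_sum_mk) ?_
        have h2 : Cardinal.mk (Fin (n+1) → ↥A) ≤ Cardinal.aleph (n : Ordinal) := by
          rw [Cardinal.mk_arrow, hA, Cardinal.mk_fin]
          simp only [Cardinal.lift_natCast, Cardinal.lift_uzero]
          exact le_of_eq (Cardinal.power_nat_eq haleph0 (Nat.succ_le_succ (Nat.zero_le n)))
        calc (Cardinal.sum fun t : Fin (n+1) → ↥A =>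
                Cardinal.mk ↥(F fun j => ((t j : α))))
            ≤ Cardinal.sum (fun _ : Fin (n+1) → ↥A => ℵ₀) :=
              Cardinal.sum_le_sum _ _ (fun t => le_of_lt ((hF _).lt_aleph0))
          _ = Cardinal.mk (Fin (n+1) → ↥A) * ℵ₀ := Cardinal.sum_const' _ _
          _ ≤ Cardinal.aleph (n : Ordinal) * ℵ₀ := by
              exact mul_le_mul_left h2 _
          _ = Cardinal.aleph (n : Ordinal) := by
              rw [Cardinal.mul_eq_left haleph0 haleph0 Cardinal.aleph0_ne_zero]
      have h3 : Cardinal.mk ↥U ≤ Cardinal.aleph (n : Ordinal) := by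
        refine le_trans (Cardinal.mk_union_le _ _) ?_
        rw [hA]
        refine le_trans (add_le_add le_rfl h1) ?_
        simp [Cardinal.add_eq_left haleph0 le_rfl]
      refine lt_of_le_of_lt h3 (lt_of_lt_of_le ?_ hα)
      rw [Cardinal.aleph_lt_aleph]
      exact_mod_cast Nat.cast_lt.mpr (Nat.lt_succ_self n)
    obtain ⟨b, hb⟩ : ∃ b, b ∉ U := by
      by_contra hcon
      push_neg at hcon
      have : U = Set.univ := Set.eq_univ_of_forall hcon
      rw [this, Cardinal.mk_univ] at hUcard
      exact lt_irrefl _ hUcard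
    have hbA : b ∉ A := fun h => hb (Set.mem_union_left _ h)
    have hbF : ∀ t : Fin (n+1) → ↥A, b ∉ F (fun j => ((t j : α))) := by
      intro t ht
      exact hb (Set.mem_union_right _ (Set.mem_iUnion.mpr ⟨t, ht⟩))
    -- inner function
    set G : (Fin n → ↥A) → Set ↥A :=
      fun t => (fun x : ↥A => (x : α)) ⁻¹' (F (Fin.snoc (fun j => ((t j : α))) b)) with hG
    have hGfin : ∀ t, (G t).Finite :=
      fun t => Set.Finite.preimage (Set.injOn_of_injective Subtype.coe_injective) (hF _)
    obtain ⟨a', ha'inj, ha'⟩ := ih ↥A (le_of_eq hA.symm) G hGfin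
    set aa : Fin (n+2) → α := Fin.snoc (fun i => ((a' i : α))) b with haa
    have haalast : aa (Fin.last (n+1)) = b := Fin.snoc_last _ _
    have haacast : ∀ k : Fin (n+1), aa (Fin.castSucc k) = ((a' k : α)) :=
      fun k => Fin.snoc_castSucc _ _ _
    refine ⟨aa, ?_, ?_⟩
    · intro x y hxy
      induction x using Fin.lastCases with
      | last =>
        induction y using Fin.lastCases with
        | last => rfl
        | cast y' =>
          rw [haalast, haacast] at hxy
          exact absurd ((a' y').2) (hxy ▸ hbA)
      | cast x' =>
        induction y using Fin.lastCases with
        | last =>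
          rw [haalast, haacast] at hxy
          exact absurd ((a' x').2) (hxy.symm ▸ hbA)
        | cast y' =>
          rw [haacast, haacast] at hxy
          rw [ha'inj (Subtype.coe_injective hxy)]
    · intro i
      induction i using Fin.lastCases with
      | last =>
        have htup : (fun j : Fin (n+1) => aa
            ((Fin.last (n+1)).succAbove j)) = (fun j : Fin (n+1) => ((a' j : α))) := by
          funext j
          rw [Fin.succAbove_last_apply, haacast]
        rw [haalast, htup]
        exact hbF a'
      | cast i' =>
        have htup : (fun j : Fin (n+1) => aa
            ((Fin.castSucc i').succAbove j)) =
            ((Fin.snoc (fun j' : Fin n => ((a' (i'.succAbove j') : α))) b : Fin (n+1) → α)) := by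
          funext j
          induction j using Fin.lastCases with
          | last =>
            rw [Fin.succAbove_of_le_castSucc _ _ (Fin.castSucc_le_castSucc_iff.mpr (Fin.le_last i')),
              Fin.succ_last, haalast, Fin.snoc_last]
          | cast j' =>
            rw [Fin.castSucc_succAbove_castSucc, haacast, Fin.snoc_castSucc]
        rw [haacast, htup]
        exact ha' i'


section Aux
variable {Q : Type v} [Lattice Q]

/-- In a lower finite poset, below any element there is a lower cover above any strictly
smaller element. -/
lemma exists_cover_between (hfin : ∀ x : Q, (Set.Iic x).Finite) {u z : Q} (h : u < z) :
    ∃ w, u ≤ w ∧ w ⋖ z := by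
  have hS : ({w : Q | u ≤ w ∧ w < z}).Finite :=
    (hfin z).subset (fun w hw => le_of_lt hw.2)
  obtain ⟨w, hwS, hwmax⟩ := Set.Finite.exists_maximalFor id _ hS ⟨u, le_refl u, h⟩
  refine ⟨w, hwS.1, hwS.2, fun y hy hyz => ?_⟩
  exact hy.not_ge (hwmax ⟨le_trans hwS.1 (le_of_lt hy), hyz⟩ (le_of_lt hy))

lemma le_foldr_sup_of_mem {c : Q} {l : List Q} {x : Q} (h : x ∈ l) :
    x ≤ l.foldr (· ⊔ ·) c := by
  induction l with
  | nil => simp at h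
  | cons y l ih =>
    rcases List.mem_cons.mp h with rfl | h
    · exact le_sup_left
    · exact le_trans (ih h) le_sup_right

lemma base_le_foldr_sup (c : Q) (l : List Q) : c ≤ l.foldr (· ⊔ ·) c := by
  induction l with
  | nil => exact le_refl c
  | cons y l ih => exact le_trans ih le_sup_right

lemma foldr_sup_le {c u : Q} {l : List Q} (hc : c ≤ u) (h : ∀ x ∈ l, x ≤ u) :
    l.foldr (· ⊔ ·) c ≤ u := by
  induction l with
  | nil => exact hc
  | cons y l ih =>
    exact sup_le (h y List.mem_cons_self) (ih (fun x hx => h x (List.mem_cons_of_mem y hx)))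

/-- Bound an ideal-join decomposition of a fold. -/
lemma exists_ideal_bound (I : Order.Ideal Q) (c : Q) :
    ∀ l : List Q, l ≠ [] → (∀ y ∈ l, ∃ x ∈ I, y = x ⊔ c) →
    ∃ X ∈ I, l.foldr (· ⊔ ·) c ≤ X ⊔ c ∧ X ≤ l.foldr (· ⊔ ·) c := by
  intro l
  induction l with
  | nil => intro h; exact absurd rfl h
  | cons y l ih =>
    intro _ hmem
    obtain ⟨x, hxI, hyx⟩ := hmem y List.mem_cons_self
    rcases eq_or_ne l [] with rfl | hl
    · refine ⟨x, hxI, ?_, ?_⟩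
      · simp only [List.foldr_cons, List.foldr_nil]
        rw [hyx]; exact sup_le le_rfl le_sup_right
      · simp only [List.foldr_cons, List.foldr_nil]
        rw [hyx]; exact le_trans le_sup_left le_sup_left
    · obtain ⟨X, hXI, hX1, hX2⟩ := ih hl (fun z hz => hmem z (List.mem_cons_of_mem y hz))
      refine ⟨x ⊔ X, I.sup_mem hxI hXI, ?_, ?_⟩
      · simp only [List.foldr_cons]
        refine sup_le ?_ (le_trans hX1 ?_)
        · rw [hyx]
          exact sup_le (le_trans le_sup_left le_sup_left) le_sup_right
        · exact sup_le (le_trans le_sup_right le_sup_left) le_sup_right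
      · simp only [List.foldr_cons]
        refine sup_le ?_ (le_trans hX2 le_sup_right)
        rw [hyx] at *
        exact le_trans le_sup_left le_sup_left

end Aux

/-- counting along a map with countable fibers -/
lemma mk_le_mk_mul_aleph0_of_fibers {α : Type v} {β : Type v} (f : α → β)
    (hf : ∀ b : β, Countable {x : α // f x = b}) :
    Cardinal.mk α ≤ Cardinal.mk β * Cardinal.aleph0 := by
  have e := Equiv.sigmaFiberEquiv f
  calc Cardinal.mk α
      = Cardinal.mk (Σ b : β, {x : α // f x = b}) := (Cardinal.mk_congr e).symm
    _ = Cardinal.sum (fun b : β => Cardinal.mk {x : α // f x = b}) := Cardinal.mk_sigma _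
    _ ≤ Cardinal.sum (fun _ : β => (Cardinal.aleph0 : Cardinal.{v})) :=
        Cardinal.sum_le_sum _ _ (fun b => Cardinal.mk_le_aleph0)
    _ = Cardinal.mk β * Cardinal.aleph0 := Cardinal.sum_const' _ _


/-- `P` is an `n`-ladder: a nonempty lower finite lattice in which every element
has at most `n` lower covers. -/
def IsNLadder (P : Type*) [Lattice P] (n : ℕ) : Prop :=
  Nonempty P ∧ (∀ x : P, (Set.Iic x).Finite) ∧ ∀ x : P, {y : P | y ⋖ x}.ncard ≤ n

/-- `P` is a maximal `n`-ladder: an `n`-ladder which is not order-isomorphic to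
a proper ideal of any `n`-ladder. -/
def IsMaximalNLadder (P : Type u) [Lattice P] (n : ℕ) : Prop :=
  IsNLadder P n ∧
    ¬ ∃ (Q : Type u) (_ : Lattice Q) (I : Order.Ideal Q),
        IsNLadder Q n ∧ I.IsProper ∧ Nonempty (P ≃o ↥I)

/-- Ditor: every `n`-ladder of cardinality `ℵ_{n-1}` is maximal. -/
theorem ladder_aleph_maximal {P : Type u} [Lattice P] (n : ℕ) (hn : 0 < n)
    (h : IsNLadder P n)
    (hcard : Cardinal.mk P = Cardinal.aleph ((n - 1 : ℕ) : Ordinal)) :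
    IsMaximalNLadder P n := by
  obtain ⟨m, rfl⟩ : ∃ m, n = m + 1 := ⟨n - 1, (Nat.succ_pred_eq_of_pos hn).symm⟩
  simp only [Nat.add_sub_cancel] at hcard
  refine ⟨h, ?_⟩
  rintro ⟨Q, _, I, ⟨hQne, hQfin, hQcov⟩, hproper, ⟨iso⟩⟩
  have haleph0 : (Cardinal.aleph0 : Cardinal.{u}) ≤ Cardinal.aleph (m : Ordinal) :=
    Cardinal.aleph0_le_aleph _
  have hIcard : Cardinal.mk ↥I = Cardinal.aleph (m : Ordinal) := by
    rw [← hcard]; exact (Cardinal.mk_congr iso.toEquiv).symm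
  obtain ⟨c, hc⟩ : ∃ c : Q, c ∉ I :=
    Set.ne_univ_iff_exists_notMem (I : Set Q) |>.mp hproper.ne_univ
  set M : Set Q := {z | ∃ x ∈ I, z = x ⊔ c} with hM
  set f : ↥I → ↥M := fun x => ⟨(x : Q) ⊔ c, ⟨(x : Q), x.2, rfl⟩⟩ with hf
  have hfibF : ∀ z : ↥M, Finite {x : ↥I // f x = z} := by
    intro z
    have hfin : Finite ↥(Set.Iic (z : Q)) := (hQfin (z : Q)).to_subtype
    have hinj : Function.Injective
        (fun x : {x : ↥I // f x = z} => (⟨((x : ↥I) : Q),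
          le_trans le_sup_left (le_of_eq (congrArg Subtype.val x.2))⟩ :
            ↥(Set.Iic (z : Q)))) := by
      intro x y hxy
      exact Subtype.ext (Subtype.ext (congrArg (Subtype.val : ↥(Set.Iic (z : Q)) → Q) hxy))
    exact Finite.of_injective _ hinj
  have hMinf : (Cardinal.aleph0 : Cardinal.{u}) ≤ Cardinal.mk ↥M := by
    by_contra hcon
    push_neg at hcon
    have hMfin : Finite ↥M := Cardinal.lt_aleph0_iff_finite.mp hcon
    haveI := hfibF
    have : Finite ↥I := Finite.of_equiv _ (Equiv.sigmaFiberEquiv f)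
    have h2 := Cardinal.lt_aleph0_of_finite ↥I
    rw [hIcard] at h2
    exact absurd h2 (not_lt.mpr haleph0)
  have hMcard : Cardinal.aleph (m : Ordinal) ≤ Cardinal.mk ↥M := by
    have h1 : Cardinal.mk ↥I ≤ Cardinal.mk ↥M * Cardinal.aleph0 :=
      mk_le_mk_mul_aleph0_of_fibers f (fun z => (hfibF z).to_countable)
    rw [Cardinal.mul_eq_left hMinf hMinf Cardinal.aleph0_ne_zero] at h1
    exact le_trans (le_of_eq hIcard.symm) h1
  -- apply the free set theorem
  set F : (Fin m → ↥M) → Set ↥M :=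
    fun t => {w : ↥M | (w : Q) ≤ (List.ofFn (fun j => ((t j : Q)))).foldr (· ⊔ ·) c} with hF
  have hFfin : ∀ t, (F t).Finite := by
    intro t
    have heq : F t = (fun w : ↥M => (w : Q)) ⁻¹'
        (Set.Iic ((List.ofFn (fun j => ((t j : Q)))).foldr (· ⊔ ·) c)) := rfl
    rw [heq]
    exact Set.Finite.preimage (Set.injOn_of_injective Subtype.coe_injective) (hQfin _)
  obtain ⟨a, hainj, ha⟩ := kuratowski_free m ↥M hMcard F hFfin
  set z : Q := (List.ofFn (fun k : Fin (m+1) => ((a k : Q)))).foldr (· ⊔ ·) c with hz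
  set zi : Fin (m+1) → Q :=
    fun i => (List.ofFn (fun j : Fin m => ((a (i.succAbove j) : Q)))).foldr (· ⊔ ·) c with hzi
  have hcz : c ≤ z := base_le_foldr_sup c _
  have hkz : ∀ k, ((a k : Q)) ≤ z :=
    fun k => le_foldr_sup_of_mem (List.mem_ofFn.mpr ⟨k, rfl⟩)
  have hziz : ∀ i, zi i ≤ z := by
    intro i
    refine foldr_sup_le hcz ?_
    intro x hx
    obtain ⟨j, rfl⟩ := List.mem_ofFn.mp hx
    exact hkz _
  have hanotle : ∀ i, ¬ ((a i : Q) ≤ zi i) := by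
    intro i hle
    exact ha i hle
  have hzilt : ∀ i, zi i < z := by
    intro i
    refine lt_of_le_of_ne (hziz i) (fun heq => hanotle i ?_)
    rw [heq]; exact hkz i
  choose w hw1 hw2 using fun i => exists_cover_between hQfin (hzilt i)
  obtain ⟨X, hXI, hXc, hXz⟩ := exists_ideal_bound I c
      (List.ofFn (fun k : Fin (m+1) => ((a k : Q))))
      (by simp)
      (by
        intro y hy
        obtain ⟨k, rfl⟩ := List.mem_ofFn.mp hy
        exact (a k).2)
  have hXlt : X < z := by
    refine lt_of_le_of_ne hXz (fun heq => hc ?_)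
    exact I.lower (heq ▸ hcz) hXI
  obtain ⟨w0, hw01, hw02⟩ := exists_cover_between hQfin hXlt
  have hcw0 : ¬ c ≤ w0 := by
    intro hcle
    exact absurd (le_trans hXc (sup_le hw01 hcle)) hw02.lt.not_ge
  have hcwi : ∀ i, c ≤ w i := fun i => le_trans (base_le_foldr_sup c _) (hw1 i)
  have hw0ne : ∀ i, w0 ≠ w i := by
    intro i heq
    exact hcw0 (heq ▸ hcwi i)
  have hwne : ∀ i j, i ≠ j → w i ≠ w j := by
    intro i j hij heq
    have hz_le : z ≤ zi i ⊔ zi j := by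
      refine foldr_sup_le (le_trans (base_le_foldr_sup c _) le_sup_left) ?_
      intro x hx
      obtain ⟨k, rfl⟩ := List.mem_ofFn.mp hx
      rcases eq_or_ne k i with rfl | hki
      · obtain ⟨j', hj'⟩ := Fin.exists_succAbove_eq hij
        refine le_trans ?_ le_sup_right
        rw [← hj']
        exact le_foldr_sup_of_mem (List.mem_ofFn.mpr ⟨j', rfl⟩)
      · obtain ⟨j', hj'⟩ := Fin.exists_succAbove_eq hki
        refine le_trans ?_ le_sup_left
        rw [← hj']
        exact le_foldr_sup_of_mem (List.mem_ofFn.mpr ⟨j', rfl⟩)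
    have hzw : z ≤ w i := le_trans hz_le (sup_le (hw1 i) (heq ▸ hw1 j))
    exact absurd (lt_of_le_of_lt hzw (hw2 i).lt) (lt_irrefl z)
  set W : Fin (m+2) → Q := Fin.cases w0 w with hW
  have hW0 : W 0 = w0 := rfl
  have hWs : ∀ i : Fin (m+1), W i.succ = w i := fun i => by
    simp [hW]
  have hWinj : Function.Injective W := by
    intro i j hij
    induction i using Fin.cases with
    | zero =>
      induction j using Fin.cases with
      | zero => rfl
      | succ j' =>
        rw [hW0, hWs] at hij
        exact absurd hij (hw0ne j')
    | succ i' =>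
      induction j using Fin.cases with
      | zero =>
        rw [hW0, hWs] at hij
        exact absurd hij.symm (hw0ne i')
      | succ j' =>
        rw [hWs, hWs] at hij
        by_contra hne
        exact hwne i' j' (fun he => hne (he ▸ rfl)) hij
  have hsub : Set.range W ⊆ {y : Q | y ⋖ z} := by
    rintro y ⟨i, rfl⟩
    induction i using Fin.cases with
    | zero => rw [hW0]; exact hw02
    | succ i' => rw [hWs]; exact hw2 i'
  have hCfin : ({y : Q | y ⋖ z}).Finite := (hQfin z).subset (fun y hy => le_of_lt hy.lt)
  have hcount : (Set.range W).ncard = m + 2 := by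
    rw [← Set.image_univ, Set.ncard_image_of_injective _ hWinj, Set.ncard_univ,
      Nat.card_eq_fintype_card, Fintype.card_fin]
  have hle2 := Set.ncard_le_ncard hsub hCfin
  rw [hcount] at hle2
  have hfin2 := hQcov z
  omega
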